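/- Assume \alpha_2 \in (0,1) and \varphi_2 = (1-\alpha_2)\beta_2 > 1, and let t(x) = g_{\alpha_2}(1 - e^{-\beta_2 x}). Then t has a unique critical point P_c in (0,1), which is a global maximum of t on [0,1], and a unique fixed point P_f in (0,1). Moreover: (a) if t(P_c) \le P_c, then t^k(x) \to P_f as k \to \infty for every x \in (0,1), and \sigma = \psi(\beta_2 P_f); (b) if t(P_c) > P_c, then \sigma \ge \sqrt{\psi(\beta_2 P_f)\, \psi(\beta_2 P_m)}, where P_m = t(P_c). -/

import Mathlib

/-- `g α x` : the expected density after the epidemic stage on a percolated 3-tree. -/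
noncomputable def g (α x : ℝ) : ℝ :=
  if x = 0 then 0
  else (1 - Real.sqrt (1 - 4 * (1 - α) * x * (1 - x))) ^ 3 / (8 * (1 - α) ^ 2 * x ^ 2)

/-- `ψ(x) = (1 - e^{-x})/x`, with `ψ(0) = 1`. -/
noncomputable def psi (x : ℝ) : ℝ := if x = 0 then 1 else (1 - Real.exp (-x)) / x

/-- `pbar α = sup_{x ∈ [0,1]} g α x`. -/
noncomputable def pbar (α : ℝ) : ℝ := sSup (g α '' Set.Icc 0 1)

/-- The one-type map for the strong species alone: `t(x) = g_{α₂}(1 - e^{-β₂ x})`. -/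
noncomputable def tmap (α₂ β₂ : ℝ) (x : ℝ) : ℝ := g α₂ (1 - Real.exp (-(β₂ * x)))

/-- `σ = inf_{x ∈ [0,p̄₂]} liminf_n (∏_{k<n} ψ(β₂ tᵏ(x)))^{1/n}`. -/
noncomputable def sigma (α₂ β₂ : ℝ) : ℝ :=
  sInf ((fun x => Filter.liminf
      (fun n : ℕ => (∏ k ∈ Finset.range n, psi (β₂ * (tmap α₂ β₂)^[k] x)) ^ (1 / (n : ℝ)))
      Filter.atTop) '' Set.Icc 0 (pbar α₂))

noncomputable def Sf (α y : ℝ) : ℝ := Real.sqrt (1 - 4 * (1 - α) * y * (1 - y))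
noncomputable def Gf (α y : ℝ) : ℝ := 8 * (1 - α) * y * (1 - y) ^ 3 / (1 + Sf α y) ^ 3
noncomputable def Ef (α y : ℝ) : ℝ := 6 * (1 - α) * (1 - 2 * y) / (Sf α y * (1 + Sf α y))
noncomputable def Ff (α y : ℝ) : ℝ := 1 / y - 3 / (1 - y) + Ef α y
noncomputable def qf (α y : ℝ) : ℝ := (1 - y) / (1 + Sf α y)
noncomputable def uf (β x : ℝ) : ℝ := 1 - Real.exp (-(β * x))

section basic
variable {α y : ℝ}

lemma Dge (hα1 : α ≤ 1) (hy0 : 0 ≤ y) (hy1 : y ≤ 1) :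
    α ≤ 1 - 4 * (1 - α) * y * (1 - y) := by
  nlinarith [mul_nonneg (sub_nonneg.2 hα1) (sq_nonneg (1 - 2 * y))]

lemma Dpos (hα0 : 0 < α) (hα1 : α < 1) (hy0 : 0 ≤ y) (hy1 : y ≤ 1) :
    0 < 1 - 4 * (1 - α) * y * (1 - y) :=
  lt_of_lt_of_le hα0 (Dge hα1.le hy0 hy1)

lemma Spos (hα0 : 0 < α) (hα1 : α < 1) (hy0 : 0 ≤ y) (hy1 : y ≤ 1) : 0 < Sf α y :=
  Real.sqrt_pos.2 (Dpos hα0 hα1 hy0 hy1)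

lemma Ssq (hα0 : 0 < α) (hα1 : α < 1) (hy0 : 0 ≤ y) (hy1 : y ≤ 1) :
    Sf α y ^ 2 = 1 - 4 * (1 - α) * y * (1 - y) :=
  Real.sq_sqrt (Dpos hα0 hα1 hy0 hy1).le

lemma Snonneg : 0 ≤ Sf α y := Real.sqrt_nonneg _

lemma Sle1 (hα1 : α ≤ 1) (hy0 : 0 ≤ y) (hy1 : y ≤ 1) : Sf α y ≤ 1 := by
  rw [show (1:ℝ) = Real.sqrt 1 by simp [Real.sqrt_one]]
  apply Real.sqrt_le_sqrt
  nlinarith [mul_nonneg (sub_nonneg.2 hα1) (mul_nonneg hy0 (sub_nonneg.2 hy1))]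

lemma one_add_S_pos : 0 < 1 + Sf α y := by
  have := Snonneg (α := α) (y := y); linarith

lemma g_eq_Gf (hα0 : 0 < α) (hα1 : α < 1) (hy0 : 0 ≤ y) (hy1 : y ≤ 1) :
    g α y = Gf α y := by
  rcases eq_or_lt_of_le hy0 with h | hy0'
  · simp [g, Gf, ← h]
  have hα' : (0:ℝ) < 1 - α := by linarith
  have hS := Spos hα0 hα1 hy0 hy1
  have hS2 := Ssq hα0 hα1 hy0 hy1
  have key : (1 - Sf α y) * (1 + Sf α y) = 4 * (1 - α) * y * (1 - y) := by nlinarith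
  have h1Sne : (1 + Sf α y) ≠ 0 := ne_of_gt one_add_S_pos
  have h1S : 1 - Sf α y = 4 * (1 - α) * y * (1 - y) / (1 + Sf α y) := by
    field_simp
    linarith [key]
  rw [g, if_neg (ne_of_gt hy0')]
  show (1 - Sf α y) ^ 3 / (8 * (1 - α) ^ 2 * y ^ 2) = Gf α y
  rw [h1S, Gf]
  field_simp
  ring

lemma Gf_nonneg (hα1 : α < 1) (hy0 : 0 ≤ y) (hy1 : y ≤ 1) : 0 ≤ Gf α y := by
  apply div_nonneg _ (le_of_lt (pow_pos one_add_S_pos 3))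
  have h1 : (0:ℝ) ≤ 1 - α := by linarith
  have h2 : (0:ℝ) ≤ 1 - y := by linarith
  have h3 : (0:ℝ) ≤ (1 - y) ^ 3 := pow_nonneg h2 3
  nlinarith [mul_nonneg (mul_nonneg h1 hy0) h3]

lemma Gf_pos (hα1 : α < 1) (hy0 : 0 < y) (hy1 : y < 1) : 0 < Gf α y := by
  apply div_pos _ (pow_pos one_add_S_pos 3)
  have h1 : (0:ℝ) < 1 - α := by linarith
  have h2 : (0:ℝ) < 1 - y := by linarith
  have h3 : (0:ℝ) < (1 - y) ^ 3 := pow_pos h2 3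
  nlinarith [mul_pos (mul_pos h1 hy0) h3]

lemma Gf_le (hα0 : 0 < α) (hα1 : α < 1) (hy0 : 0 ≤ y) (hy1 : y ≤ 1) : Gf α y ≤ 27 / 32 := by
  have hS0 := Snonneg (α := α) (y := y)
  have h2 : (1:ℝ) ≤ (1 + Sf α y) ^ 3 := by nlinarith [sq_nonneg (Sf α y)]
  have h1 : Gf α y ≤ 8 * (1 - α) * y * (1 - y) ^ 3 := by
    rw [Gf, div_le_iff₀ (pow_pos one_add_S_pos 3)]
    have h3 : (0:ℝ) ≤ 8 * (1 - α) * y * (1 - y) ^ 3 := by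
      have ha : (0:ℝ) ≤ 1 - α := by linarith
      have hb : (0:ℝ) ≤ (1 - y) ^ 3 := pow_nonneg (by linarith) 3
      nlinarith [mul_nonneg (mul_nonneg ha hy0) hb]
    nlinarith
  have h4 : y * (1 - y) ^ 3 ≤ 27 / 256 := by
    nlinarith [sq_nonneg (4 * y - 1), sq_nonneg (1 - y), sq_nonneg y, mul_nonneg hy0 (sub_nonneg.2 hy1)]
  have hyy : (0:ℝ) ≤ y * (1 - y) ^ 3 := mul_nonneg hy0 (pow_nonneg (by linarith) 3)
  nlinarith [h4, hyy]

end basic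

noncomputable def Lf (α y : ℝ) : ℝ :=
  Real.log (8 * (1 - α)) + Real.log y + 3 * Real.log (1 - y) - 3 * Real.log (1 + Sf α y)

section deriv1
variable {α y : ℝ}

lemma hasDerivAt_D :
    HasDerivAt (fun x : ℝ => 1 - 4 * (1 - α) * x * (1 - x))
      (-(4 * (1 - α)) * (1 - 2 * y)) y := by
  have h2 : HasDerivAt (fun x : ℝ => x * (1 - x)) (1 * (1 - y) + y * (0 - 1)) y :=
    (hasDerivAt_id y).mul ((hasDerivAt_const y 1).sub (hasDerivAt_id y))
  have h3 := (h2.const_mul (4 * (1 - α))).const_sub 1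
  have : (fun x : ℝ => 1 - 4 * (1 - α) * (x * (1 - x)))
      = fun x : ℝ => 1 - 4 * (1 - α) * x * (1 - x) := by
    funext x; ring
  rw [this] at h3
  exact h3.congr_deriv (by ring)

lemma hasDerivAt_Sf (hα0 : 0 < α) (hα1 : α < 1) (hy0 : 0 ≤ y) (hy1 : y ≤ 1) :
    HasDerivAt (Sf α) (-2 * (1 - α) * (1 - 2 * y) / Sf α y) y := by
  have hD := Dpos hα0 hα1 hy0 hy1
  have hS := Spos hα0 hα1 hy0 hy1
  have h4 := (Real.hasDerivAt_sqrt (ne_of_gt hD)).comp y hasDerivAt_D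
  refine h4.congr_deriv (Eq.symm ?_)
  rw [show Real.sqrt (1 - 4 * (1 - α) * y * (1 - y)) = Sf α y from rfl]
  rw [div_eq_iff (ne_of_gt hS), one_div, mul_comm]
  field_simp
  try ring

lemma Gf_eq_exp (hα1 : α < 1) (hy0 : 0 < y) (hy1 : y < 1) :
    Gf α y = Real.exp (Lf α y) := by
  have hA : (0:ℝ) < 8 * (1 - α) := by linarith
  have h1y : (0:ℝ) < 1 - y := by linarith
  have hS : (0:ℝ) < 1 + Sf α y := one_add_S_pos
  rw [Lf, Real.exp_sub, Real.exp_add, Real.exp_add]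
  rw [show (3:ℝ) * Real.log (1 - y) = Real.log ((1 - y) ^ 3) by
    rw [Real.log_pow]; push_cast; ring]
  rw [show (3:ℝ) * Real.log (1 + Sf α y) = Real.log ((1 + Sf α y) ^ 3) by
    rw [Real.log_pow]; push_cast; ring]
  rw [Real.exp_log hA, Real.exp_log hy0, Real.exp_log (by positivity),
    Real.exp_log (by positivity)]
  rw [Gf]
  try ring

lemma hasDerivAt_Lf (hα0 : 0 < α) (hα1 : α < 1) (hy0 : 0 < y) (hy1 : y < 1) :
    HasDerivAt (Lf α) (Ff α y) y := by
  have hS := Spos hα0 hα1 hy0.le hy1.le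
  have hS2 := Ssq hα0 hα1 hy0.le hy1.le
  have h1y : (0:ℝ) < 1 - y := by linarith
  have h1S : (0:ℝ) < 1 + Sf α y := one_add_S_pos
  have hlog1 : HasDerivAt (fun x : ℝ => Real.log x) y⁻¹ y := Real.hasDerivAt_log (ne_of_gt hy0)
  have hlog2 : HasDerivAt (fun x : ℝ => Real.log (1 - x)) ((1 - y)⁻¹ * (0 - 1)) y :=
    (Real.hasDerivAt_log (ne_of_gt h1y)).comp y ((hasDerivAt_const y 1).sub (hasDerivAt_id y))
  have hlog3 : HasDerivAt (fun x : ℝ => Real.log (1 + Sf α x))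
      ((1 + Sf α y)⁻¹ * (-2 * (1 - α) * (1 - 2 * y) / Sf α y)) y := by
    have := (Real.hasDerivAt_log (ne_of_gt h1S)).comp y
      ((hasDerivAt_Sf hα0 hα1 hy0.le hy1.le).const_add 1)
    exact this
  have h := (((hlog1.const_add (Real.log (8 * (1 - α)))).add
      (hlog2.const_mul 3)).sub (hlog3.const_mul 3))
  have he : Lf α = fun x : ℝ => Real.log (8 * (1 - α)) + Real.log x
      + 3 * Real.log (1 - x) - 3 * Real.log (1 + Sf α x) := rfl
  rw [he]
  refine h.congr_deriv (Eq.symm ?_)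
  rw [Ff, Ef]
  first
  | (field_simp; ring)
  | field_simp

lemma hasDerivAt_Gf (hα0 : 0 < α) (hα1 : α < 1) (hy0 : 0 < y) (hy1 : y < 1) :
    HasDerivAt (Gf α) (Gf α y * Ff α y) y := by
  have h := (hasDerivAt_Lf hα0 hα1 hy0 hy1).exp
  have hev : (fun x => Real.exp (Lf α x)) =ᶠ[nhds y] Gf α := by
    filter_upwards [Ioo_mem_nhds hy0 hy1] with x hx
    exact (Gf_eq_exp hα1 hx.1 hx.2).symm
  have := h.congr_of_eventuallyEq hev.symm
  rwa [Gf_eq_exp hα1 hy0 hy1]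

end deriv1

noncomputable def Fd (α y : ℝ) : ℝ :=
  -(1 / y ^ 2) - 3 / ((1 - y) ^ 2) +
    (-12 * (1 - α) * (Sf α y * (1 + Sf α y)) -
      6 * (1 - α) * (1 - 2 * y) *
        (-2 * (1 - α) * (1 - 2 * y) / Sf α y * (1 + Sf α y) +
          Sf α y * (-2 * (1 - α) * (1 - 2 * y) / Sf α y))) /
      (Sf α y * (1 + Sf α y)) ^ 2

section deriv2
variable {α y : ℝ}

lemma hasDerivAt_Ef (hα0 : 0 < α) (hα1 : α < 1) (hy0 : 0 < y) (hy1 : y < 1) :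
    HasDerivAt (Ef α)
      ((-12 * (1 - α) * (Sf α y * (1 + Sf α y)) -
        6 * (1 - α) * (1 - 2 * y) *
          (-2 * (1 - α) * (1 - 2 * y) / Sf α y * (1 + Sf α y) +
            Sf α y * (-2 * (1 - α) * (1 - 2 * y) / Sf α y))) /
        (Sf α y * (1 + Sf α y)) ^ 2) y := by
  have hS := Spos hα0 hα1 hy0.le hy1.le
  have hQ : HasDerivAt (fun x => Sf α x * (1 + Sf α x))
      (-2 * (1 - α) * (1 - 2 * y) / Sf α y * (1 + Sf α y) +
        Sf α y * (-2 * (1 - α) * (1 - 2 * y) / Sf α y)) y :=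
    (hasDerivAt_Sf hα0 hα1 hy0.le hy1.le).mul
      ((hasDerivAt_Sf hα0 hα1 hy0.le hy1.le).const_add 1)
  have hN : HasDerivAt (fun x : ℝ => 6 * (1 - α) * (1 - 2 * x)) (-12 * (1 - α)) y := by
    have h := (((hasDerivAt_id y).const_mul (2:ℝ)).const_sub 1).const_mul (6 * (1 - α))
    exact h.congr_deriv (by ring)
  have hQne : Sf α y * (1 + Sf α y) ≠ 0 := by
    have := one_add_S_pos (α := α) (y := y); positivity
  have h := hN.div hQ hQne
  exact h

lemma hasDerivAt_Ff (hα0 : 0 < α) (hα1 : α < 1) (hy0 : 0 < y) (hy1 : y < 1) :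
    HasDerivAt (Ff α) (Fd α y) y := by
  have h1y : (0:ℝ) < 1 - y := by linarith
  have hinv : HasDerivAt (fun x : ℝ => 1 / x) (-(1 / y ^ 2)) y := by
    have h := hasDerivAt_inv (ne_of_gt hy0)
    have he : (fun x : ℝ => 1 / x) = fun x : ℝ => x⁻¹ := funext fun x => one_div x
    rw [he]
    exact h.congr_deriv (by rw [one_div])
  have hinv2 : HasDerivAt (fun x : ℝ => 3 / (1 - x)) (3 / ((1 - y) ^ 2)) y := by
    have h := ((hasDerivAt_inv (ne_of_gt h1y)).comp y
      ((hasDerivAt_const y 1).sub (hasDerivAt_id y))).const_mul (3:ℝ)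
    have he : (fun x : ℝ => 3 * ((fun x : ℝ => x⁻¹) ∘ (fun x : ℝ => 1 - x)) x)
        = fun x : ℝ => 3 / (1 - x) := by
      funext x; simp [Function.comp, div_eq_mul_inv]
    rw [he] at h
    exact h.congr_deriv (by ring)
  have h := (hinv.sub hinv2).add (hasDerivAt_Ef hα0 hα1 hy0 hy1)
  have he : (fun x : ℝ => 1 / x - 3 / (1 - x) + Ef α x) = Ff α := rfl
  exact h

lemma twelve_le (hy0 : 0 < y) (hy1 : y < 1) : 12 ≤ 1 / y ^ 2 + 3 / (1 - y) ^ 2 := by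
  have h1y : (0:ℝ) < 1 - y := by linarith
  have k1 : 4 * y * (1 - y) ≤ 1 := by nlinarith [sq_nonneg (1 - 2 * y)]
  have k2 : (0:ℝ) ≤ 4 * y * (1 - y) := by positivity
  have k3 : 12 * (y * (1 - y)) ^ 2 ≤ 3 * (y * (1 - y)) := by
    nlinarith [mul_nonneg k2 (sub_nonneg.2 k1)]
  have key : 12 * (y ^ 2 * (1 - y) ^ 2) ≤ (1 - y) ^ 2 + 3 * y ^ 2 := by
    nlinarith [k3, sq_nonneg (14 * y - 5)]
  have e1 : 1 / y ^ 2 + 3 / (1 - y) ^ 2 = ((1 - y) ^ 2 + 3 * y ^ 2) / (y ^ 2 * (1 - y) ^ 2) := by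
    field_simp
    try ring
  rw [e1, le_div_iff₀ (by positivity)]
  linarith [key]

lemma Fd_neg (hα0 : 0 < α) (hα1 : α < 1) (hy0 : 0 < y) (hy1 : y < 1) : Fd α y < 0 := by
  have hS := Spos hα0 hα1 hy0.le hy1.le
  have hS2 := Ssq hα0 hα1 hy0.le hy1.le
  have h1S := one_add_S_pos (α := α) (y := y)
  set s := Sf α y with hs
  have key : (1 - α) * (1 - 2 * y) ^ 2 = s ^ 2 - α := by
    rw [hS2]; ring
  have hEd : (-12 * (1 - α) * (s * (1 + s)) -
      6 * (1 - α) * (1 - 2 * y) *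
        (-2 * (1 - α) * (1 - 2 * y) / s * (1 + s) + s * (-2 * (1 - α) * (1 - 2 * y) / s))) /
      (s * (1 + s)) ^ 2 ≤ 12 * (1 - α) := by
    rw [div_le_iff₀ (by positivity)]
    have e2 : -12 * (1 - α) * (s * (1 + s)) -
        6 * (1 - α) * (1 - 2 * y) *
          (-2 * (1 - α) * (1 - 2 * y) / s * (1 + s) + s * (-2 * (1 - α) * (1 - 2 * y) / s))
        = (-12 * (1 - α) * s ^ 2 * (1 + s) + 12 * ((1 - α) * (1 - 2 * y) ^ 2) * (1 - α) * (1 + 2 * s)) / s := by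
      field_simp
      ring
    rw [e2, div_le_iff₀ hS]
    rw [key]
    have hA : (0:ℝ) < 1 - α := by linarith
    have t1 : (0:ℝ) ≤ (1 - α) * (α * (1 + 2 * s)) :=
      mul_nonneg hA.le (mul_nonneg hα0.le (by positivity))
    have t2 : (0:ℝ) ≤ (1 - α) * (2 * s ^ 4 + s ^ 5) :=
      mul_nonneg hA.le (by positivity)
    nlinarith [t1, t2]
  have h12 := twelve_le hy0 hy1
  rw [Fd]
  have : 12 * (1 - α) < 12 := by linarith
  linarith [hEd]

end deriv2


section uflem
variable {α β x y : ℝ}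

lemma uf_strictMono (hβ : 0 < β) : StrictMono (uf β) := by
  intro x x' h
  have : Real.exp (-(β * x')) < Real.exp (-(β * x)) := by
    apply Real.exp_lt_exp.2; nlinarith
  unfold uf; linarith

lemma uf_pos (hβ : 0 < β) (hx : 0 < x) : 0 < uf β x := by
  have : Real.exp (-(β * x)) < 1 := by
    rw [Real.exp_lt_one_iff]; nlinarith
  unfold uf; linarith

lemma uf_lt_one : uf β x < 1 := by
  have := Real.exp_pos (-(β * x)); unfold uf; linarith

lemma uf_nonneg (hβ : 0 < β) (hx : 0 ≤ x) : 0 ≤ uf β x := by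
  have : Real.exp (-(β * x)) ≤ 1 := by
    rw [Real.exp_le_one_iff]; nlinarith
  unfold uf; linarith

lemma uf_zero : uf β 0 = 0 := by simp [uf]

lemma hasDerivAt_uf : HasDerivAt (uf β) (β * Real.exp (-(β * x))) x := by
  have h1 : HasDerivAt (fun x : ℝ => -(β * x)) (-β) x := by
    exact (((hasDerivAt_id x).const_mul β).neg).congr_deriv (by ring)
  have h2 := (h1.exp).const_sub 1
  have he : (fun x : ℝ => 1 - Real.exp (-(β * x))) = uf β := rfl
  rw [he] at h2
  exact h2.congr_deriv (by ring)

lemma uf_continuous : Continuous (uf β) := by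
  unfold uf; continuity

end uflem

section tmaplem
variable {α β x : ℝ}

lemma tmap_eq_Gf (hα0 : 0 < α) (hα1 : α < 1) (hβ : 0 < β) (hx : 0 ≤ x) :
    tmap α β x = Gf α (uf β x) :=
  g_eq_Gf hα0 hα1 (uf_nonneg hβ hx) uf_lt_one.le

lemma tmap_zero : tmap α β 0 = 0 := by
  simp [tmap, g]

lemma hasDerivAt_tmap (hα0 : 0 < α) (hα1 : α < 1) (hβ : 0 < β) (hx : 0 < x) :
    HasDerivAt (tmap α β)
      (Gf α (uf β x) * Ff α (uf β x) * (β * Real.exp (-(β * x)))) x := by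
  have hu0 := uf_pos hβ hx
  have hu1 := uf_lt_one (β := β) (x := x)
  have h := (hasDerivAt_Gf hα0 hα1 hu0 hu1).comp x hasDerivAt_uf
  apply h.congr_of_eventuallyEq
  filter_upwards [Ioi_mem_nhds hx] with x' hx'
  exact tmap_eq_Gf hα0 hα1 hβ (le_of_lt hx')

lemma tmap_continuousOn (hα0 : 0 < α) (hα1 : α < 1) (hβ : 0 < β) :
    ContinuousOn (tmap α β) (Set.Ici 0) := by
  have hG : Continuous (fun x => Gf α (uf β x)) := by
    apply Continuous.div
    · unfold uf; continuity
    · apply Continuous.pow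
      apply Continuous.add continuous_const
      apply Real.continuous_sqrt.comp
      unfold uf; continuity
    · intro x
      exact ne_of_gt (pow_pos (one_add_S_pos (α := α) (y := uf β x)) 3)
  apply hG.continuousOn.congr
  intro x hx
  exact tmap_eq_Gf hα0 hα1 hβ hx

lemma Ff_strictAntiOn (hα0 : 0 < α) (hα1 : α < 1) :
    StrictAntiOn (Ff α) (Set.Ioo 0 1) := by
  apply strictAntiOn_of_deriv_neg (convex_Ioo 0 1)
  · intro y hy
    exact (hasDerivAt_Ff hα0 hα1 hy.1 hy.2).continuousAt.continuousWithinAt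
  · intro y hy
    rw [interior_Ioo] at hy
    rw [(hasDerivAt_Ff hα0 hα1 hy.1 hy.2).deriv]
    exact Fd_neg hα0 hα1 hy.1 hy.2

lemma Ef_nonpos {y : ℝ} (hα1 : α < 1) (hy : 1 / 2 ≤ y) : Ef α y ≤ 0 := by
  apply div_nonpos_of_nonpos_of_nonneg
  · nlinarith
  · exact mul_nonneg Snonneg (le_of_lt one_add_S_pos)

lemma Ff_neg_big {y : ℝ} (hα0 : 0 < α) (hα1 : α < 1) (hy : 1 / 2 ≤ y) (hy1 : y < 1) :
    Ff α y < 0 := by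
  have h1 : 1 / y ≤ 2 := by rw [div_le_iff₀ (by linarith)]; linarith
  have h2 : (6:ℝ) ≤ 3 / (1 - y) := by rw [le_div_iff₀ (by linarith)]; linarith
  have h3 := Ef_nonpos (y := y) hα1 hy
  rw [Ff]; linarith

lemma Ff_pos_fifth (hα0 : 0 < α) (hα1 : α < 1) : 0 < Ff α (1 / 5) := by
  have hS := Spos (y := (1/5 : ℝ)) hα0 hα1 (by norm_num) (by norm_num)
  have h1S := one_add_S_pos (α := α) (y := (1/5 : ℝ))
  have h3 : 0 ≤ Ef α (1 / 5) := by
    apply div_nonneg _ (le_of_lt (mul_pos hS h1S))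
    nlinarith
  rw [Ff]; norm_num; nlinarith

lemma exists_ystar (hα0 : 0 < α) (hα1 : α < 1) :
    ∃ ys ∈ Set.Ioo (1/5 : ℝ) (1/2), Ff α ys = 0 := by
  have hcont : ContinuousOn (Ff α) (Set.Icc (1/5 : ℝ) (1/2)) := by
    intro y hy
    have hy0 : (0:ℝ) < y := lt_of_lt_of_le (by norm_num) hy.1
    have hy1 : y < 1 := lt_of_le_of_lt hy.2 (by norm_num)
    exact (hasDerivAt_Ff hα0 hα1 hy0 hy1).continuousAt.continuousWithinAt
  have hsub := intermediate_value_Ioo' (by norm_num : (1/5 : ℝ) ≤ 1/2) hcont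
  have h0 : (0:ℝ) ∈ Set.Ioo (Ff α (1/2)) (Ff α (1/5)) :=
    ⟨Ff_neg_big hα0 hα1 (by norm_num) (by norm_num), Ff_pos_fifth hα0 hα1⟩
  obtain ⟨ys, hys, h⟩ := hsub h0
  exact ⟨ys, hys, h⟩

end tmaplem

section psilem
variable {x : ℝ}

lemma psi_zero : psi 0 = 1 := by simp [psi]

lemma psi_of_ne (hx : x ≠ 0) : psi x = (1 - Real.exp (-x)) / x := by
  rw [psi, if_neg hx]

lemma psi_pos (hx : 0 ≤ x) : 0 < psi x := by
  rcases eq_or_lt_of_le hx with h | h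
  · rw [← h, psi_zero]; norm_num
  · rw [psi_of_ne (ne_of_gt h)]
    apply div_pos _ h
    have : Real.exp (-x) < 1 := by rw [Real.exp_lt_one_iff]; linarith
    linarith

lemma psi_le_one (hx : 0 ≤ x) : psi x ≤ 1 := by
  rcases eq_or_lt_of_le hx with h | h
  · rw [← h, psi_zero]
  · rw [psi_of_ne (ne_of_gt h), div_le_one h]
    linarith [Real.add_one_le_exp (-x)]

lemma psi_tendsto_punctured : Filter.Tendsto psi (nhdsWithin 0 {(0:ℝ)}ᶜ) (nhds 1) := by
  have hf : HasDerivAt (fun x : ℝ => 1 - Real.exp (-x)) 1 0 := by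
    have h1 : HasDerivAt (fun x : ℝ => -x) (-1) 0 := (hasDerivAt_id 0).neg
    have h2 := (h1.exp).const_sub 1
    simpa using h2
  have h := hasDerivAt_iff_tendsto_slope.1 hf
  apply h.congr'
  filter_upwards [self_mem_nhdsWithin] with y hy
  have hy0 : y ≠ 0 := hy
  rw [slope_def_field, psi_of_ne hy0]
  simp [div_eq_mul_inv]
  try ring

lemma hasDerivAt_psi (hx : 0 < x) :
    HasDerivAt psi ((Real.exp (-x) * x - (1 - Real.exp (-x))) / x ^ 2) x := by
  have h1 : HasDerivAt (fun y : ℝ => 1 - Real.exp (-y)) (Real.exp (-x)) x := by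
    have h1' : HasDerivAt (fun y : ℝ => -y) (-1) x := (hasDerivAt_id x).neg
    have h2 := (h1'.exp).const_sub 1
    exact h2.congr_deriv (by ring)
  have h := h1.div (hasDerivAt_id x) (ne_of_gt hx)
  have he : (fun y : ℝ => (1 - Real.exp (-y)) / id y) =ᶠ[nhds x] psi := by
    filter_upwards [Ioi_mem_nhds hx] with y hy
    rw [psi_of_ne (ne_of_gt hy)]; rfl
  have h' := h.congr_of_eventuallyEq he.symm
  exact h'.congr_deriv (by simp [id])

lemma psi_continuousOn : ContinuousOn psi (Set.Ici 0) := by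
  intro x hx
  rcases eq_or_lt_of_le (Set.mem_Ici.1 hx) with h | h
  · rw [← continuousWithinAt_diff_self]
    rw [ContinuousWithinAt, ← h, psi_zero]
    apply psi_tendsto_punctured.mono_left
    apply nhdsWithin_mono
    intro y hy
    simpa using hy.2
  · exact (hasDerivAt_psi h).continuousAt.continuousWithinAt

lemma psi_strictAntiOn : StrictAntiOn psi (Set.Ici 0) := by
  apply strictAntiOn_of_deriv_neg (convex_Ici 0) psi_continuousOn
  intro x hx
  rw [interior_Ici] at hx
  rw [(hasDerivAt_psi hx).deriv]
  have hx' : (0:ℝ) < x := hx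
  apply div_neg_of_neg_of_pos _ (pow_pos hx' 2)
  have h := Real.add_one_lt_exp (ne_of_gt hx')
  have hep := Real.exp_pos x
  have hinv : Real.exp (-x) * Real.exp x = 1 := by rw [← Real.exp_add]; simp
  nlinarith [h, hep, Real.exp_pos (-x), hinv]

lemma psi_anti {a b : ℝ} (ha : 0 ≤ a) (hab : a ≤ b) : psi b ≤ psi a := by
  rcases eq_or_lt_of_le hab with h | h
  · rw [h]
  · exact le_of_lt (psi_strictAntiOn ha (le_trans ha hab) h)

end psilem

section qflem
variable {α y : ℝ}

lemma hasDerivAt_qf (hα0 : 0 < α) (hα1 : α < 1) (hy0 : 0 ≤ y) (hy1 : y ≤ 1) :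
    HasDerivAt (qf α)
      (((0 - 1) * (1 + Sf α y) -
        (1 - y) * (-2 * (1 - α) * (1 - 2 * y) / Sf α y)) / (1 + Sf α y) ^ 2) y := by
  have h1 : HasDerivAt (fun x : ℝ => 1 - x) (0 - 1) y :=
    (hasDerivAt_const y 1).sub (hasDerivAt_id y)
  have h2 := (hasDerivAt_Sf hα0 hα1 hy0 hy1).const_add 1
  exact h1.div h2 (ne_of_gt one_add_S_pos)

lemma qf_deriv_neg (hα0 : 0 < α) (hα1 : α < 1) (hy0 : 0 ≤ y) (hy1 : y ≤ 1) :
    ((0 - 1) * (1 + Sf α y) -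
        (1 - y) * (-2 * (1 - α) * (1 - 2 * y) / Sf α y)) / (1 + Sf α y) ^ 2 < 0 := by
  have hS := Spos hα0 hα1 hy0 hy1
  have hS2 := Ssq hα0 hα1 hy0 hy1
  have h1S := one_add_S_pos (α := α) (y := y)
  apply div_neg_of_neg_of_pos _ (pow_pos h1S 2)
  set s := Sf α y with hs
  have key : 2 * (1 - α) * (1 - y) * (1 - 2 * y) < s * (1 + s) := by
    have hid : s ^ 2 - (2 * (1 - α) - 1 - 2 * (1 - α) * y) ^ 2
        = 4 * (1 - α) * α * (1 - y) ^ 2 := by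
      rw [hS2]; ring
    rcases le_or_gt (2 * (1 - α) - 1 - 2 * (1 - α) * y) 0 with hc | hc
    · nlinarith [sq_nonneg (2 * (1 - α) - 1 - 2 * (1 - α) * y)]
    · have hy1' : y < 1 := by nlinarith
      have h4 : (0:ℝ) < 4 * (1 - α) * α * (1 - y) ^ 2 := by
        have : (0:ℝ) < 1 - α := by linarith
        have : (0:ℝ) < (1 - y)^2 := pow_pos (by linarith) 2
        nlinarith
      have hsc : 2 * (1 - α) - 1 - 2 * (1 - α) * y < s := by nlinarith
      nlinarith
  have e1 : (0 - 1) * (1 + s) - (1 - y) * (-2 * (1 - α) * (1 - 2 * y) / s)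
      = (2 * (1 - α) * (1 - y) * (1 - 2 * y) - s * (1 + s)) / s := by
    field_simp
    ring
  rw [e1]
  apply div_neg_of_neg_of_pos _ hS
  linarith

lemma qf_strictAntiOn (hα0 : 0 < α) (hα1 : α < 1) :
    StrictAntiOn (qf α) (Set.Icc 0 1) := by
  apply strictAntiOn_of_deriv_neg (convex_Icc 0 1)
  · intro y hy
    exact (hasDerivAt_qf hα0 hα1 hy.1 hy.2).continuousAt.continuousWithinAt
  · intro y hy
    rw [interior_Icc] at hy
    rw [(hasDerivAt_qf hα0 hα1 hy.1.le hy.2.le).deriv]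
    exact qf_deriv_neg hα0 hα1 hy.1.le hy.2.le

lemma qf_pos (hy1 : y < 1) : 0 < qf α y := by
  apply div_pos (by linarith) one_add_S_pos

lemma qf_zero : qf α 0 = 1 / 2 := by
  rw [qf]
  rw [show Sf α 0 = 1 by rw [Sf]; norm_num]
  norm_num

lemma Gf_eq_qf (hy : (0:ℝ) ≤ 1 + Sf α y) : Gf α y = 8 * (1 - α) * y * qf α y ^ 3 := by
  rw [Gf, qf, div_pow]
  ring

end qflem

section ratio
variable {α β x : ℝ}

lemma uf_eq_psi (hβ : 0 < β) (hx : 0 < x) : uf β x = β * x * psi (β * x) := by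
  have hbx : β * x ≠ 0 := ne_of_gt (mul_pos hβ hx)
  rw [psi_of_ne hbx, uf]
  field_simp

lemma tmap_eq_prod (hα0 : 0 < α) (hα1 : α < 1) (hβ : 0 < β) (hx : 0 < x) :
    tmap α β x = 8 * (1 - α) * (β * x * psi (β * x)) * qf α (uf β x) ^ 3 := by
  rw [tmap_eq_Gf hα0 hα1 hβ hx.le, Gf_eq_qf (le_of_lt one_add_S_pos), ← uf_eq_psi hβ hx]

lemma ratio_lt (hα0 : 0 < α) (hα1 : α < 1) (hβ : 0 < β) {x x' : ℝ}
    (hx : 0 < x) (hxx : x < x') (hx1 : x' < 1) :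
    tmap α β x' * x < tmap α β x * x' := by
  have hx' : 0 < x' := lt_trans hx hxx
  have huu : uf β x < uf β x' := uf_strictMono hβ hxx
  have hu0 : 0 ≤ uf β x := uf_nonneg hβ hx.le
  have hu0' : 0 ≤ uf β x' := uf_nonneg hβ hx'.le
  have hq : qf α (uf β x') < qf α (uf β x) :=
    qf_strictAntiOn hα0 hα1 ⟨hu0, uf_lt_one.le⟩ ⟨hu0', uf_lt_one.le⟩ huu
  have hq' : 0 < qf α (uf β x') := qf_pos uf_lt_one
  have hψ : psi (β * x') < psi (β * x) :=
    psi_strictAntiOn (le_of_lt (mul_pos hβ hx)) (le_of_lt (mul_pos hβ hx'))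
      (by nlinarith)
  have hψ' : 0 < psi (β * x') := psi_pos (le_of_lt (mul_pos hβ hx'))
  have hcore : psi (β * x') * qf α (uf β x') ^ 3 < psi (β * x) * qf α (uf β x) ^ 3 := by
    apply mul_lt_mul'' hψ (pow_lt_pow_left₀ hq hq'.le (by norm_num)) hψ'.le
    positivity
  have h8 : (0:ℝ) < 8 * (1 - α) * β * (x * x') := by
    have : (0:ℝ) < 1 - α := by linarith
    positivity
  rw [tmap_eq_prod hα0 hα1 hβ hx, tmap_eq_prod hα0 hα1 hβ hx']
  nlinarith [mul_lt_mul_of_pos_left hcore h8]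

lemma qf_comp_continuous : Continuous (fun x => qf α (uf β x)) := by
  apply Continuous.div
  · unfold uf; continuity
  · apply Continuous.add continuous_const
    apply Real.continuous_sqrt.comp
    unfold uf; continuity
  · intro x
    exact ne_of_gt (one_add_S_pos (α := α) (y := uf β x))

lemma tendsto_ratio (hα0 : 0 < α) (hα1 : α < 1) (hβ : 0 < β) :
    Filter.Tendsto (fun x => tmap α β x / x) (nhdsWithin 0 (Set.Ioi 0))
      (nhds ((1 - α) * β)) := by
  have h1 : Filter.Tendsto (fun x : ℝ => β * x) (nhdsWithin 0 (Set.Ioi 0))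
      (nhdsWithin 0 {(0:ℝ)}ᶜ) := by
    apply tendsto_nhdsWithin_of_tendsto_nhds_of_eventually_within
    · have : Filter.Tendsto (fun x : ℝ => β * x) (nhds 0) (nhds (β * 0)) :=
        (continuous_const.mul continuous_id).tendsto 0
      simpa using this.mono_left nhdsWithin_le_nhds
    · filter_upwards [self_mem_nhdsWithin] with x hx
      have : (0:ℝ) < x := hx
      simp only [Set.mem_compl_iff, Set.mem_singleton_iff]
      positivity
  have hψ : Filter.Tendsto (fun x => psi (β * x)) (nhdsWithin 0 (Set.Ioi 0)) (nhds 1) :=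
    psi_tendsto_punctured.comp h1
  have hq : Filter.Tendsto (fun x => qf α (uf β x) ^ 3) (nhdsWithin 0 (Set.Ioi 0))
      (nhds ((1/2 : ℝ) ^ 3)) := by
    have h := ((qf_comp_continuous (α := α) (β := β)).pow 3).tendsto 0
    simp only [Pi.pow_apply] at h
    rw [uf_zero, qf_zero] at h
    exact h.mono_left nhdsWithin_le_nhds
  have hprod := (hψ.const_mul (8 * (1 - α) * β)).mul hq
  have heq : (fun x => 8 * (1 - α) * β * psi (β * x) * qf α (uf β x) ^ 3)
      =ᶠ[nhdsWithin 0 (Set.Ioi 0)] fun x => tmap α β x / x := by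
    filter_upwards [self_mem_nhdsWithin] with x hx
    have hx' : (0:ℝ) < x := hx
    rw [tmap_eq_prod hα0 hα1 hβ hx']
    field_simp
  have := hprod.congr' heq
  convert this using 2
  ring

lemma exists_fixed (hα0 : 0 < α) (hα1 : α < 1) (hβ : 0 < β) (hφ : 1 < (1 - α) * β) :
    ∃ Pf, Pf ∈ Set.Ioo (0:ℝ) 1 ∧ tmap α β Pf = Pf := by
  have h := (tendsto_ratio hα0 hα1 hβ).eventually (eventually_gt_nhds hφ)
  have h2 : Set.Ioo (0:ℝ) 1 ∈ nhdsWithin 0 (Set.Ioi 0) :=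
    mem_nhdsWithin.2 ⟨Set.Iio 1, isOpen_Iio, by norm_num, by
      intro z hz; exact ⟨hz.2, hz.1⟩⟩
  obtain ⟨x₀, hr, hx₀⟩ := (h.and (Filter.eventually_of_mem h2 (fun z hz => hz))).exists
  have hx₀0 : (0:ℝ) < x₀ := hx₀.1
  have hfx₀ : x₀ < tmap α β x₀ := by
    rw [lt_div_iff₀ hx₀0] at hr; linarith
  have hcont : ContinuousOn (fun x => tmap α β x - x) (Set.Icc x₀ 1) := by
    apply ContinuousOn.sub _ continuousOn_id
    exact (tmap_continuousOn hα0 hα1 hβ).mono (fun z hz => le_trans hx₀0.le hz.1)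
  have ht1 : tmap α β 1 - 1 < 0 := by
    have := Gf_le (y := uf β 1) hα0 hα1 (uf_nonneg hβ zero_le_one) uf_lt_one.le
    rw [tmap_eq_Gf hα0 hα1 hβ zero_le_one]
    linarith
  have hsub := intermediate_value_Ioo' hx₀.2.le hcont
  have h0 : (0:ℝ) ∈ Set.Ioo (tmap α β 1 - 1) (tmap α β x₀ - x₀) := ⟨ht1, by linarith⟩
  obtain ⟨Pf, hPf, hPf0⟩ := hsub h0
  exact ⟨Pf, ⟨lt_trans hx₀0 hPf.1, hPf.2⟩, by linarith [show tmap α β Pf - Pf = 0 from hPf0]⟩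

lemma tmap_gt_of_lt_fixed (hα0 : 0 < α) (hα1 : α < 1) (hβ : 0 < β)
    {Pf x : ℝ} (hPf : Pf ∈ Set.Ioo (0:ℝ) 1) (hfix : tmap α β Pf = Pf)
    (hx : 0 < x) (hxPf : x < Pf) : x < tmap α β x := by
  have h := ratio_lt hα0 hα1 hβ hx hxPf hPf.2
  rw [hfix] at h
  have := hPf.1
  nlinarith

lemma tmap_lt_of_gt_fixed (hα0 : 0 < α) (hα1 : α < 1) (hβ : 0 < β)
    {Pf x : ℝ} (hPf : Pf ∈ Set.Ioo (0:ℝ) 1) (hfix : tmap α β Pf = Pf)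
    (hx : Pf < x) (hx1 : x < 1) : tmap α β x < x := by
  have h := ratio_lt hα0 hα1 hβ hPf.1 hx hx1
  rw [hfix] at h
  have := hPf.1
  nlinarith

lemma fixed_unique (hα0 : 0 < α) (hα1 : α < 1) (hβ : 0 < β)
    {Pf x : ℝ} (hPf : Pf ∈ Set.Ioo (0:ℝ) 1) (hfix : tmap α β Pf = Pf)
    (hx : x ∈ Set.Ioo (0:ℝ) 1) (hfx : tmap α β x = x) : x = Pf := by
  rcases lt_trichotomy x Pf with h | h | h
  · have := tmap_gt_of_lt_fixed hα0 hα1 hβ hPf hfix hx.1 h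
    rw [hfx] at this; exact absurd this (lt_irrefl x)
  · exact h
  · have := tmap_lt_of_gt_fixed hα0 hα1 hβ hPf hfix h hx.2
    rw [hfx] at this; exact absurd this (lt_irrefl x)

end ratio

section critical
variable {α β ys : ℝ}

lemma beta_gt_one (hα0 : 0 < α) (hβ : 0 < β) (hφ : 1 < (1 - α) * β) : 1 < β := by
  nlinarith

lemma exp_neg_beta_lt (hα0 : 0 < α) (hβ : 0 < β) (hφ : 1 < (1 - α) * β) :
    Real.exp (-β) < 1 / 2 := by
  have h1 : (1:ℝ) < β := beta_gt_one hα0 hβ hφ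
  have h2 : Real.exp (-β) < Real.exp (-1) := by
    apply Real.exp_lt_exp.2; linarith
  have h3 : Real.exp (-1) < 1 / 2 := by
    rw [Real.exp_neg]
    rw [inv_lt_comm₀ (Real.exp_pos 1) (by norm_num)]
    have := Real.exp_one_gt_d9
    linarith
  linarith

lemma uf_Pc (hβ : 0 < β) (hys : ys ∈ Set.Ioo (1/5 : ℝ) (1/2)) :
    uf β (-Real.log (1 - ys) / β) = ys := by
  have h1 : (0:ℝ) < 1 - ys := by have := hys.2; norm_num at this ⊢; linarith
  rw [uf]
  rw [show -(β * (-Real.log (1 - ys) / β)) = Real.log (1 - ys) by field_simp]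
  rw [Real.exp_log h1]
  ring

lemma Pc_mem (hα0 : 0 < α) (hβ : 0 < β) (hφ : 1 < (1 - α) * β)
    (hys : ys ∈ Set.Ioo (1/5 : ℝ) (1/2)) :
    -Real.log (1 - ys) / β ∈ Set.Ioo (0:ℝ) 1 := by
  have h1 : (0:ℝ) < 1 - ys := by have := hys.2; norm_num at this ⊢; linarith
  have h2 : 1 - ys < 1 := by have := hys.1; norm_num at this ⊢; linarith
  constructor
  · apply div_pos _ hβ
    have := Real.log_neg h1 h2
    linarith
  · rw [div_lt_one hβ]
    have h3 : Real.exp (-β) < 1 - ys := by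
      have := exp_neg_beta_lt hα0 hβ hφ
      have := hys.2
      norm_num at this ⊢
      linarith
    have := Real.log_lt_log (Real.exp_pos (-β)) h3
    rw [Real.log_exp] at this
    linarith

lemma deriv_tmap_eq (hα0 : 0 < α) (hα1 : α < 1) (hβ : 0 < β) {x : ℝ} (hx : 0 < x) :
    deriv (tmap α β) x
      = Gf α (uf β x) * Ff α (uf β x) * (β * Real.exp (-(β * x))) :=
  (hasDerivAt_tmap hα0 hα1 hβ hx).deriv

lemma deriv_tmap_pos (hα0 : 0 < α) (hα1 : α < 1) (hβ : 0 < β)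
    (hys : ys ∈ Set.Ioo (1/5 : ℝ) (1/2)) (h0 : Ff α ys = 0)
    {x : ℝ} (hx : 0 < x) (hxPc : uf β x < ys) : 0 < deriv (tmap α β) x := by
  rw [deriv_tmap_eq hα0 hα1 hβ hx]
  have hu0 := uf_pos hβ hx
  have hu1 := uf_lt_one (β := β) (x := x)
  have hys' : ys ∈ Set.Ioo (0:ℝ) 1 := ⟨by linarith [hys.1], by linarith [hys.2]⟩
  have hF : 0 < Ff α (uf β x) := by
    have := Ff_strictAntiOn hα0 hα1 ⟨hu0, hu1⟩ hys' hxPc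
    rw [h0] at this; exact this
  have hG := Gf_pos hα1 hu0 hu1
  have : (0:ℝ) < β * Real.exp (-(β * x)) := mul_pos hβ (Real.exp_pos _)
  positivity

lemma deriv_tmap_neg (hα0 : 0 < α) (hα1 : α < 1) (hβ : 0 < β)
    (hys : ys ∈ Set.Ioo (1/5 : ℝ) (1/2)) (h0 : Ff α ys = 0)
    {x : ℝ} (hx : 0 < x) (hxPc : ys < uf β x) : deriv (tmap α β) x < 0 := by
  rw [deriv_tmap_eq hα0 hα1 hβ hx]
  have hu0 := uf_pos hβ hx
  have hu1 := uf_lt_one (β := β) (x := x)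
  have hys' : ys ∈ Set.Ioo (0:ℝ) 1 := ⟨by linarith [hys.1], by linarith [hys.2]⟩
  have hF : Ff α (uf β x) < 0 := by
    have := Ff_strictAntiOn hα0 hα1 hys' ⟨hu0, hu1⟩ hxPc
    rw [h0] at this; exact this
  have hG := Gf_pos hα1 hu0 hu1
  have hb : (0:ℝ) < β * Real.exp (-(β * x)) := mul_pos hβ (Real.exp_pos _)
  have := mul_pos hG hb
  nlinarith

lemma tmap_strictMonoOn (hα0 : 0 < α) (hα1 : α < 1) (hβ : 0 < β) (hφ : 1 < (1 - α) * β)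
    (hys : ys ∈ Set.Ioo (1/5 : ℝ) (1/2)) (h0 : Ff α ys = 0) :
    StrictMonoOn (tmap α β) (Set.Icc 0 (-Real.log (1 - ys) / β)) := by
  have hPc := Pc_mem hα0 hβ hφ hys
  apply strictMonoOn_of_deriv_pos (convex_Icc _ _)
  · exact (tmap_continuousOn hα0 hα1 hβ).mono (fun z hz => hz.1)
  · intro x hx
    rw [interior_Icc] at hx
    apply deriv_tmap_pos hα0 hα1 hβ hys h0 hx.1
    rw [← uf_Pc hβ hys]
    exact uf_strictMono hβ hx.2

lemma tmap_strictAntiOn (hα0 : 0 < α) (hα1 : α < 1) (hβ : 0 < β) (hφ : 1 < (1 - α) * β)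
    (hys : ys ∈ Set.Ioo (1/5 : ℝ) (1/2)) (h0 : Ff α ys = 0) :
    StrictAntiOn (tmap α β) (Set.Icc (-Real.log (1 - ys) / β) 1) := by
  have hPc := Pc_mem hα0 hβ hφ hys
  apply strictAntiOn_of_deriv_neg (convex_Icc _ _)
  · exact (tmap_continuousOn hα0 hα1 hβ).mono (fun z hz => le_trans hPc.1.le hz.1)
  · intro x hx
    rw [interior_Icc] at hx
    apply deriv_tmap_neg hα0 hα1 hβ hys h0 (lt_trans hPc.1 hx.1)
    rw [← uf_Pc hβ hys]
    exact uf_strictMono hβ hx.1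

lemma tmap_max (hα0 : 0 < α) (hα1 : α < 1) (hβ : 0 < β) (hφ : 1 < (1 - α) * β)
    (hys : ys ∈ Set.Ioo (1/5 : ℝ) (1/2)) (h0 : Ff α ys = 0) :
    ∀ x ∈ Set.Icc (0:ℝ) 1, tmap α β x ≤ tmap α β (-Real.log (1 - ys) / β) := by
  intro x hx
  have hPc := Pc_mem hα0 hβ hφ hys
  rcases le_total x (-Real.log (1 - ys) / β) with h | h
  · exact (tmap_strictMonoOn hα0 hα1 hβ hφ hys h0).monotoneOn
      ⟨hx.1, h⟩ ⟨hPc.1.le, le_refl _⟩ h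
  · exact (tmap_strictAntiOn hα0 hα1 hβ hφ hys h0).antitoneOn
      ⟨le_refl _, hPc.2.le⟩ ⟨h, hx.2⟩ h

lemma bddAbove_g (hα0 : 0 < α) (hα1 : α < 1) :
    BddAbove (g α '' Set.Icc 0 1) := by
  refine ⟨27/32, ?_⟩
  rintro v ⟨y, hy, rfl⟩
  rw [g_eq_Gf hα0 hα1 hy.1 hy.2]
  exact Gf_le hα0 hα1 hy.1 hy.2

lemma pbar_le_2732 (hα0 : 0 < α) (hα1 : α < 1) : pbar α ≤ 27/32 := by
  have hne : (g α '' Set.Icc 0 1).Nonempty := ⟨g α 0, ⟨0, ⟨le_refl 0, zero_le_one⟩, rfl⟩⟩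
  unfold pbar
  apply csSup_le hne
  rintro v ⟨y, hy, rfl⟩
  rw [g_eq_Gf hα0 hα1 hy.1 hy.2]
  exact Gf_le hα0 hα1 hy.1 hy.2

lemma le_pbar (hα0 : 0 < α) (hα1 : α < 1) {y : ℝ} (hy : y ∈ Set.Icc (0:ℝ) 1) :
    g α y ≤ pbar α := by
  unfold pbar
  exact le_csSup (bddAbove_g hα0 hα1) ⟨y, hy, rfl⟩

lemma pbar_nonneg (hα0 : 0 < α) (hα1 : α < 1) : 0 ≤ pbar α := by
  have := le_pbar hα0 hα1 (y := 0) ⟨le_refl 0, zero_le_one⟩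
  rwa [show g α 0 = 0 by simp [g]] at this

lemma tmap_le_pbar (hα0 : 0 < α) (hα1 : α < 1) (hβ : 0 < β) {x : ℝ} (hx : 0 ≤ x) :
    tmap α β x ≤ pbar α :=
  le_pbar hα0 hα1 ⟨uf_nonneg hβ hx, uf_lt_one.le⟩

lemma tmap_pos (hα0 : 0 < α) (hα1 : α < 1) (hβ : 0 < β) {x : ℝ} (hx : 0 < x) :
    0 < tmap α β x := by
  rw [tmap_eq_Gf hα0 hα1 hβ hx.le]
  exact Gf_pos hα1 (uf_pos hβ hx) uf_lt_one

lemma tmap_nonneg (hα0 : 0 < α) (hα1 : α < 1) (hβ : 0 < β) {x : ℝ} (hx : 0 ≤ x) :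
    0 ≤ tmap α β x := by
  rw [tmap_eq_Gf hα0 hα1 hβ hx]
  exact Gf_nonneg hα1 (uf_nonneg hβ hx) uf_lt_one.le

end critical

section orbit
variable {α β : ℝ}

lemma orbit_conv (hα0 : 0 < α) (hα1 : α < 1) (hβ : 0 < β) {Pc Pf : ℝ}
    (hPc : Pc ∈ Set.Ioo (0:ℝ) 1)
    (hmono : MonotoneOn (tmap α β) (Set.Icc 0 Pc))
    (hPf : Pf ∈ Set.Ioo (0:ℝ) 1) (hfix : tmap α β Pf = Pf) (hPfPc : Pf ≤ Pc)
    {z : ℝ} (hz0 : 0 < z) (hzPc : z ≤ Pc) :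
    Filter.Tendsto (fun k => (tmap α β)^[k] z) Filter.atTop (nhds Pf) := by
  set w : ℕ → ℝ := fun k => (tmap α β)^[k] z with hw
  have hw0 : w 0 = z := rfl
  have hwsucc : ∀ k, w (k + 1) = tmap α β (w k) := fun k =>
    Function.iterate_succ_apply' (tmap α β) k z
  rcases le_or_gt z Pf with hle | hgt
  · -- increasing case
    have hkey : ∀ k, (z ≤ w k ∧ w k ≤ Pf) := by
      intro k
      induction k with
      | zero => exact ⟨le_of_eq hw0.symm, hw0 ▸ hle⟩
      | succ k ih =>
        have hwk0 : 0 < w k := lt_of_lt_of_le hz0 ih.1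
        have h2 : w (k + 1) ≤ Pf := by
          rw [hwsucc, ← hfix]
          exact hmono ⟨hwk0.le, le_trans ih.2 hPfPc⟩ ⟨hPf.1.le, hPfPc⟩ ih.2
        have h3 : z ≤ w (k + 1) := by
          rcases eq_or_lt_of_le ih.2 with he | hlt
          · rw [hwsucc, he, hfix]; exact hle
          · rw [hwsucc]
            exact le_trans ih.1 (tmap_gt_of_lt_fixed hα0 hα1 hβ hPf hfix hwk0 hlt).le
        exact ⟨h3, h2⟩
    have hstep : ∀ k, w k ≤ w (k + 1) := by
      intro k
      rcases eq_or_lt_of_le (hkey k).2 with he | hlt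
      · rw [hwsucc, he, hfix]
      · rw [hwsucc]
        exact (tmap_gt_of_lt_fixed hα0 hα1 hβ hPf hfix
          (lt_of_lt_of_le hz0 (hkey k).1) hlt).le
    have hmono_w : Monotone w := monotone_nat_of_le_succ hstep
    have hbdd : BddAbove (Set.range w) := by
      refine ⟨Pf, ?_⟩
      rintro v ⟨k, rfl⟩
      exact (hkey k).2
    have hconv := tendsto_atTop_ciSup hmono_w hbdd
    set L := ⨆ k, w k with hL
    have hzL : z ≤ L := hw0 ▸ le_ciSup hbdd 0
    have hLPf : L ≤ Pf := ciSup_le fun k => (hkey k).2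
    have hL0 : 0 < L := lt_of_lt_of_le hz0 hzL
    have hL1 : L < 1 := lt_of_le_of_lt hLPf hPf.2
    have hcont : ContinuousAt (tmap α β) L :=
      (hasDerivAt_tmap hα0 hα1 hβ hL0).continuousAt
    have h4 : Filter.Tendsto (fun k => w (k + 1)) Filter.atTop (nhds L) :=
      hconv.comp (Filter.tendsto_add_atTop_nat 1)
    have h5 : Filter.Tendsto (fun k => tmap α β (w k)) Filter.atTop
        (nhds (tmap α β L)) := hcont.tendsto.comp hconv
    have h6 : (fun k => w (k + 1)) = fun k => tmap α β (w k) := funext hwsucc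
    rw [h6] at h4
    have hfixL : tmap α β L = L := tendsto_nhds_unique h5 h4
    have hLPf' : L = Pf := fixed_unique hα0 hα1 hβ hPf hfix ⟨hL0, hL1⟩ hfixL
    rwa [hLPf'] at hconv
  · -- decreasing case
    have hkey : ∀ k, (Pf ≤ w k ∧ w k ≤ z) := by
      intro k
      induction k with
      | zero => exact ⟨hw0 ▸ hgt.le, le_of_eq hw0⟩
      | succ k ih =>
        have hwk1 : w k < 1 := lt_of_le_of_lt (le_trans ih.2 hzPc) hPc.2
        have h2 : Pf ≤ w (k + 1) := by
          rw [hwsucc, ← hfix]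
          exact hmono ⟨hPf.1.le, hPfPc⟩ ⟨le_trans hPf.1.le ih.1, le_trans ih.2 hzPc⟩ ih.1
        have h3 : w (k + 1) ≤ z := by
          rcases eq_or_lt_of_le ih.1 with he | hlt
          · rw [hwsucc, ← he, hfix]; exact he ▸ ih.2
          · rw [hwsucc]
            exact le_trans (tmap_lt_of_gt_fixed hα0 hα1 hβ hPf hfix hlt hwk1).le ih.2
        exact ⟨h2, h3⟩
    have hstep : ∀ k, w (k + 1) ≤ w k := by
      intro k
      rcases eq_or_lt_of_le (hkey k).1 with he | hlt
      · rw [hwsucc, ← he, hfix]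
      · rw [hwsucc]
        exact (tmap_lt_of_gt_fixed hα0 hα1 hβ hPf hfix hlt
          (lt_of_le_of_lt (le_trans (hkey k).2 hzPc) hPc.2)).le
    have hanti_w : Antitone w := antitone_nat_of_succ_le hstep
    have hbdd : BddBelow (Set.range w) := by
      refine ⟨Pf, ?_⟩
      rintro v ⟨k, rfl⟩
      exact (hkey k).1
    have hconv := tendsto_atTop_ciInf hanti_w hbdd
    set L := ⨅ k, w k with hL
    have hPfL : Pf ≤ L := le_ciInf fun k => (hkey k).1
    have hLz : L ≤ z := hw0 ▸ ciInf_le hbdd 0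
    have hL0 : 0 < L := lt_of_lt_of_le hPf.1 hPfL
    have hL1 : L < 1 := lt_of_le_of_lt (le_trans hLz hzPc) hPc.2
    have hcont : ContinuousAt (tmap α β) L :=
      (hasDerivAt_tmap hα0 hα1 hβ hL0).continuousAt
    have h4 : Filter.Tendsto (fun k => w (k + 1)) Filter.atTop (nhds L) :=
      hconv.comp (Filter.tendsto_add_atTop_nat 1)
    have h5 : Filter.Tendsto (fun k => tmap α β (w k)) Filter.atTop
        (nhds (tmap α β L)) := hcont.tendsto.comp hconv
    have h6 : (fun k => w (k + 1)) = fun k => tmap α β (w k) := funext hwsucc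
    rw [h6] at h4
    have hfixL : tmap α β L = L := tendsto_nhds_unique h5 h4
    have hLPf' : L = Pf := fixed_unique hα0 hα1 hβ hPf hfix ⟨hL0, hL1⟩ hfixL
    rwa [hLPf'] at hconv

lemma orbit_conv_all (hα0 : 0 < α) (hα1 : α < 1) (hβ : 0 < β) {Pc Pf : ℝ}
    (hPc : Pc ∈ Set.Ioo (0:ℝ) 1)
    (hmono : MonotoneOn (tmap α β) (Set.Icc 0 Pc))
    (hmax : ∀ x ∈ Set.Icc (0:ℝ) 1, tmap α β x ≤ tmap α β Pc)
    (hPf : Pf ∈ Set.Ioo (0:ℝ) 1) (hfix : tmap α β Pf = Pf)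
    (hcase : tmap α β Pc ≤ Pc)
    {x : ℝ} (hx : x ∈ Set.Ioo (0:ℝ) 1) :
    Filter.Tendsto (fun k => (tmap α β)^[k] x) Filter.atTop (nhds Pf) := by
  have hPfPc : Pf ≤ Pc := by
    have := hmax Pf ⟨hPf.1.le, hPf.2.le⟩
    rw [hfix] at this
    linarith
  have hz0 : 0 < tmap α β x := tmap_pos hα0 hα1 hβ hx.1
  have hzPc : tmap α β x ≤ Pc := le_trans (hmax x ⟨hx.1.le, hx.2.le⟩) hcase
  have h := orbit_conv hα0 hα1 hβ hPc hmono hPf hfix hPfPc hz0 hzPc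
  rw [← Filter.tendsto_add_atTop_iff_nat 1]
  have he : (fun n => (tmap α β)^[n + 1] x) = fun n => (tmap α β)^[n] (tmap α β x) := by
    funext n
    exact Function.iterate_succ_apply (tmap α β) n x
  rw [he]
  exact h

end orbit

section sigmalem
variable {α β : ℝ}

lemma orbit_nonneg (hα0 : 0 < α) (hα1 : α < 1) (hβ : 0 < β) {x : ℝ} (hx : 0 ≤ x) :
    ∀ k, 0 ≤ (tmap α β)^[k] x := by
  intro k
  induction k with
  | zero => exact hx
  | succ k ih =>
    rw [Function.iterate_succ_apply']
    exact tmap_nonneg hα0 hα1 hβ ih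

lemma orbit_le_one (hα0 : 0 < α) (hα1 : α < 1) (hβ : 0 < β) {x : ℝ}
    (hx0 : 0 ≤ x) (hx1 : x ≤ 1) : ∀ k, (tmap α β)^[k] x ≤ 1 := by
  intro k
  induction k with
  | zero => exact hx1
  | succ k ih =>
    rw [Function.iterate_succ_apply']
    have := tmap_le_pbar hα0 hα1 hβ (orbit_nonneg hα0 hα1 hβ hx0 k)
    have h2 := pbar_le_2732 hα0 hα1
    linarith

lemma geom_mean_tendsto {a : ℕ → ℝ} {l : ℝ} (hpos : ∀ k, 0 < a k)
    (hl : 0 < l) (h : Filter.Tendsto a Filter.atTop (nhds l)) :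
    Filter.Tendsto (fun n : ℕ => (∏ k ∈ Finset.range n, a k) ^ (1 / (n:ℝ)))
      Filter.atTop (nhds l) := by
  have hlog : Filter.Tendsto (fun k => Real.log (a k)) Filter.atTop
      (nhds (Real.log l)) := ((Real.continuousAt_log hl.ne').tendsto).comp h
  have hces := hlog.cesaro
  have hexp := (Real.continuous_exp.continuousAt (x := Real.log l)).tendsto.comp hces
  rw [Real.exp_log hl] at hexp
  apply hexp.congr'
  filter_upwards [Filter.eventually_gt_atTop 0] with n hn
  have hprod : 0 < ∏ k ∈ Finset.range n, a k :=
    Finset.prod_pos fun k _ => hpos k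
  show Real.exp ((n:ℝ)⁻¹ * ∑ i ∈ Finset.range n, Real.log (a i))
      = (∏ k ∈ Finset.range n, a k) ^ (1 / (n:ℝ))
  rw [Real.rpow_def_of_pos hprod, Real.log_prod (fun k _ => (hpos k).ne')]
  congr 1
  rw [one_div]
  ring

lemma cseq_tendsto (hα0 : 0 < α) (hα1 : α < 1) (hβ : 0 < β) {Pf x : ℝ}
    (hPf : Pf ∈ Set.Ioo (0:ℝ) 1) (hx : 0 ≤ x)
    (horb : Filter.Tendsto (fun k => (tmap α β)^[k] x) Filter.atTop (nhds Pf)) :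
    Filter.Tendsto
      (fun n : ℕ => (∏ k ∈ Finset.range n, psi (β * (tmap α β)^[k] x)) ^ (1 / (n:ℝ)))
      Filter.atTop (nhds (psi (β * Pf))) := by
  have hPf0 : 0 < β * Pf := mul_pos hβ hPf.1
  have hl : 0 < psi (β * Pf) := psi_pos hPf0.le
  apply geom_mean_tendsto _ hl
  · have hψcont : ContinuousAt psi (β * Pf) := (hasDerivAt_psi hPf0).continuousAt
    have hmul : ContinuousAt (fun w : ℝ => β * w) Pf :=
      (continuous_const.mul continuous_id).continuousAt
    exact (hψcont.comp hmul).tendsto.comp horb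
  · intro k
    exact psi_pos (mul_nonneg hβ.le (orbit_nonneg hα0 hα1 hβ hx k))

lemma cseq_liminf_zero (hβ : 0 < β) :
    Filter.liminf
      (fun n : ℕ => (∏ k ∈ Finset.range n, psi (β * (tmap α β)^[k] (0:ℝ))) ^ (1 / (n:ℝ)))
      Filter.atTop = 1 := by
  have horb : ∀ k, (tmap α β)^[k] (0:ℝ) = 0 := fun k =>
    Function.iterate_fixed tmap_zero k
  have he : (fun n : ℕ => (∏ k ∈ Finset.range n, psi (β * (tmap α β)^[k] (0:ℝ))) ^ (1 / (n:ℝ)))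
      = fun _ => (1:ℝ) := by
    funext n
    have : ∀ k ∈ Finset.range n, psi (β * (tmap α β)^[k] (0:ℝ)) = 1 := by
      intro k _
      rw [horb k, mul_zero, psi_zero]
    rw [Finset.prod_congr rfl this, Finset.prod_const_one, Real.one_rpow]
  rw [he]
  exact Filter.liminf_const 1

end sigmalem

section lowerb
variable {α β : ℝ}

lemma liminf_lower_b (hα0 : 0 < α) (hα1 : α < 1) (hβ : 0 < β) {Pc Pf : ℝ}
    (hPc : Pc ∈ Set.Ioo (0:ℝ) 1) (hPf : Pf ∈ Set.Ioo (0:ℝ) 1)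
    (hfix : tmap α β Pf = Pf)
    (hmax : ∀ z ∈ Set.Icc (0:ℝ) 1, tmap α β z ≤ tmap α β Pc)
    (hanti : AntitoneOn (tmap α β) (Set.Icc Pc 1))
    (hPcPf : Pc ≤ Pf)
    {x : ℝ} (hx0 : 0 ≤ x) (hx1 : x ≤ 1) :
    Real.sqrt (psi (β * Pf) * psi (β * tmap α β Pc)) ≤
      Filter.liminf
        (fun n : ℕ => (∏ k ∈ Finset.range n, psi (β * (tmap α β)^[k] x)) ^ (1 / (n:ℝ)))
        Filter.atTop := by
  have hw0 : ∀ k, 0 ≤ (tmap α β)^[k] x := orbit_nonneg hα0 hα1 hβ hx0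
  have hw1 : ∀ k, (tmap α β)^[k] x ≤ 1 := orbit_le_one hα0 hα1 hβ hx0 hx1
  have hwsucc : ∀ k, (tmap α β)^[k+1] x = tmap α β ((tmap α β)^[k] x) := fun k =>
    Function.iterate_succ_apply' (tmap α β) k x
  have hPm0 : 0 ≤ tmap α β Pc := tmap_nonneg hα0 hα1 hβ hPc.1.le
  have hPfPm : Pf ≤ tmap α β Pc := by
    have := hmax Pf ⟨hPf.1.le, hPf.2.le⟩
    rwa [hfix] at this
  set Pm := tmap α β Pc with hPm
  set A := psi (β * Pf) with hA'
  set B := psi (β * Pm) with hB'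
  have hA : 0 < A := psi_pos (mul_nonneg hβ.le hPf.1.le)
  have hB : 0 < B := psi_pos (mul_nonneg hβ.le hPm0)
  set y : ℕ → ℝ := fun k => Real.log (psi (β * (tmap α β)^[k] x)) with hy'
  have hψpos : ∀ k, 0 < psi (β * (tmap α β)^[k] x) := fun k =>
    psi_pos (mul_nonneg hβ.le (hw0 k))
  have hyB : ∀ k, (tmap α β)^[k] x ≤ Pm → Real.log B ≤ y k := by
    intro k hk
    apply Real.log_le_log hB
    exact psi_anti (mul_nonneg hβ.le (hw0 k)) (mul_le_mul_of_nonneg_left hk hβ.le)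
  have hyA : ∀ k, (tmap α β)^[k] x ≤ Pf → Real.log A ≤ y k := by
    intro k hk
    apply Real.log_le_log hA
    exact psi_anti (mul_nonneg hβ.le (hw0 k)) (mul_le_mul_of_nonneg_left hk hβ.le)
  have hwPm : ∀ k, (tmap α β)^[k+1] x ≤ Pm := fun k =>
    (hwsucc k) ▸ hmax _ ⟨hw0 k, hw1 k⟩
  have hpair : ∀ k, (tmap α β)^[k] x ≤ Pm → Real.log A + Real.log B ≤ y k + y (k+1) := by
    intro k hk
    rcases le_or_gt ((tmap α β)^[k] x) Pf with hc | hc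
    · have h1 := hyA k hc
      have h2 := hyB (k+1) (hwPm k)
      linarith
    · have h2 : (tmap α β)^[k+1] x ≤ Pf := by
        rw [hwsucc, ← hfix]
        exact hanti ⟨hPcPf, hPf.2.le⟩ ⟨le_trans hPcPf hc.le, hw1 k⟩ hc.le
      have h1 := hyA (k+1) h2
      have h3 := hyB k hk
      linarith
  set L := Real.log A + Real.log B with hL'
  have hsum : ∀ m : ℕ,
      (m:ℝ) * L + 2 * Real.log B + 2 * y 0 ≤ 2 * ∑ k ∈ Finset.range (m+2), y k := by
    intro m
    have e0 : ∑ k ∈ Finset.range (m+2), y k = y 0 + ∑ k ∈ Finset.Ico 1 (m+2), y k := by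
      rw [Finset.range_eq_Ico, Finset.sum_eq_sum_Ico_succ_bot (by omega)]
    have e1 : ∑ k ∈ Finset.Ico 1 (m+2), y k = ∑ k ∈ Finset.Ico 1 (m+1), y k + y (m+1) :=
      Finset.sum_Ico_succ_top (by omega) y
    have e2 : ∑ k ∈ Finset.Ico 1 (m+2), y k = y 1 + ∑ k ∈ Finset.Ico 2 (m+2), y k :=
      Finset.sum_eq_sum_Ico_succ_bot (by omega) y
    have e4 : ∑ k ∈ Finset.Ico 1 (m+1), y (k+1) = ∑ k ∈ Finset.Ico 2 (m+2), y k := by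
      rw [Finset.sum_Ico_eq_sum_range, Finset.sum_Ico_eq_sum_range]
      simp only [Nat.add_sub_cancel, show m + 2 - 2 = m by omega]
      exact Finset.sum_congr rfl fun i _ => by congr 1; omega
    have e3 : ∑ k ∈ Finset.Ico 1 (m+1), (y k + y (k+1))
        = ∑ k ∈ Finset.Ico 1 (m+1), y k + ∑ k ∈ Finset.Ico 1 (m+1), y (k+1) :=
      Finset.sum_add_distrib
    have hps : (m:ℝ) * L ≤ ∑ k ∈ Finset.Ico 1 (m+1), (y k + y (k+1)) := by
      have hbound : ∀ k ∈ Finset.Ico 1 (m+1), L ≤ y k + y (k+1) := by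
        intro k hk
        have hk1 : 1 ≤ k := (Finset.mem_Ico.1 hk).1
        obtain ⟨j, rfl⟩ := Nat.exists_eq_add_of_le hk1
        have hwk : (tmap α β)^[1+j] x ≤ Pm := by
          have := hwPm j
          rwa [show j + 1 = 1 + j by omega] at this
        exact hpair (1+j) hwk
      have h := Finset.card_nsmul_le_sum (Finset.Ico 1 (m+1)) (fun k => y k + y (k+1)) L hbound
      rw [Nat.card_Ico] at h
      rw [show m + 1 - 1 = m by omega, nsmul_eq_mul] at h
      exact h
    have hy1 : Real.log B ≤ y 1 := by
      have := hwPm 0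
      exact hyB 1 (by simpa using this)
    have hym : Real.log B ≤ y (m+1) := hyB (m+1) (hwPm m)
    linarith [e0, e1, e2, e3, e4, hps, hy1, hym]
  set c0 := y 0 + Real.log B - L with hc0'
  have hlbt : Filter.Tendsto (fun n : ℕ => Real.exp (c0 * (1/(n:ℝ)) + L/2))
      Filter.atTop (nhds (Real.exp (L/2))) := by
    have h1 : Filter.Tendsto (fun n : ℕ => c0 * (1/(n:ℝ)) + L/2) Filter.atTop
        (nhds (c0 * 0 + L/2)) :=
      (tendsto_one_div_atTop_nhds_zero_nat.const_mul c0).add_const (L/2)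
    have h2 := (Real.continuous_exp.continuousAt).tendsto.comp h1
    rw [mul_zero, zero_add] at h2
    exact h2
  have hev : ∀ᶠ n : ℕ in Filter.atTop,
      Real.exp (c0 * (1/(n:ℝ)) + L/2)
        ≤ (∏ k ∈ Finset.range n, psi (β * (tmap α β)^[k] x)) ^ (1 / (n:ℝ)) := by
    filter_upwards [Filter.eventually_ge_atTop 2] with n hn
    obtain ⟨m, rfl⟩ : ∃ m, n = m + 2 := ⟨n - 2, by omega⟩
    have hprod : ∏ k ∈ Finset.range (m+2), psi (β * (tmap α β)^[k] x)
        = Real.exp (∑ k ∈ Finset.range (m+2), y k) := by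
      rw [Real.exp_sum]
      exact Finset.prod_congr rfl fun k _ => (Real.exp_log (hψpos k)).symm
    rw [hprod, Real.rpow_def_of_pos (Real.exp_pos _), Real.log_exp]
    apply Real.exp_le_exp.2
    have hnpos : (0:ℝ) < ((m+2:ℕ):ℝ) := by positivity
    have hcast : ((m+2:ℕ):ℝ) = (m:ℝ) + 2 := by push_cast; ring
    have h2 : c0 + L/2 * ((m:ℝ)+2) ≤ ∑ k ∈ Finset.range (m+2), y k := by
      have := hsum m
      rw [hc0', hL'] at *
      linarith
    have e5 : (c0 + L/2*(((m+2:ℕ)):ℝ)) * (1/((m+2:ℕ):ℝ)) = c0 * (1/((m+2:ℕ):ℝ)) + L/2 := by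
      rw [add_mul, mul_assoc, mul_one_div_cancel (ne_of_gt hnpos), mul_one]
    rw [← e5]
    apply mul_le_mul_of_nonneg_right _ (by positivity)
    rw [hcast]
    exact h2
  have hle1 : ∀ n : ℕ, (∏ k ∈ Finset.range n, psi (β * (tmap α β)^[k] x)) ^ (1 / (n:ℝ)) ≤ 1 := by
    intro n
    apply Real.rpow_le_one (Finset.prod_nonneg fun k _ => (hψpos k).le)
    · apply Finset.prod_le_one (fun k _ => (hψpos k).le)
      intro k _
      exact psi_le_one (mul_nonneg hβ.le (hw0 k))
    · positivity
  have hcob : Filter.IsCoboundedUnder (· ≥ ·)  Filter.atTop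
      (fun n : ℕ => (∏ k ∈ Finset.range n, psi (β * (tmap α β)^[k] x)) ^ (1 / (n:ℝ))) := by
    apply Filter.IsBoundedUnder.isCoboundedUnder_ge
    exact Filter.isBoundedUnder_of ⟨1, fun n => hle1 n⟩
  have hmono := Filter.liminf_le_liminf hev hlbt.isBoundedUnder_ge hcob
  rw [hlbt.liminf_eq] at hmono
  have hsqrt : Real.exp (L/2) = Real.sqrt (A * B) := by
    have hAB : 0 < A * B := mul_pos hA hB
    rw [hL', ← Real.log_mul hA.ne' hB.ne', ← Real.log_sqrt hAB.le,
      Real.exp_log (Real.sqrt_pos.2 hAB)]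
  rw [hsqrt] at hmono
  exact hmono

end lowerb

theorem stmt18 (α₂ β₂ : ℝ) (hα₂ : α₂ ∈ Set.Ioo (0 : ℝ) 1) (hβ₂ : 0 < β₂)
    (hφ₂ : 1 < (1 - α₂) * β₂) :
    ∃ Pc Pf : ℝ,
      -- Pc is the unique critical point of t in (0,1)
      Pc ∈ Set.Ioo (0 : ℝ) 1 ∧ deriv (tmap α₂ β₂) Pc = 0 ∧
      (∀ x ∈ Set.Ioo (0 : ℝ) 1, deriv (tmap α₂ β₂) x = 0 → x = Pc) ∧
      -- and it is a global maximum of t on [0,1]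
      (∀ x ∈ Set.Icc (0 : ℝ) 1, tmap α₂ β₂ x ≤ tmap α₂ β₂ Pc) ∧
      -- Pf is the unique fixed point of t in (0,1)
      Pf ∈ Set.Ioo (0 : ℝ) 1 ∧ tmap α₂ β₂ Pf = Pf ∧
      (∀ x ∈ Set.Ioo (0 : ℝ) 1, tmap α₂ β₂ x = x → x = Pf) ∧
      -- (a)
      (tmap α₂ β₂ Pc ≤ Pc →
        (∀ x ∈ Set.Ioo (0 : ℝ) 1,
          Filter.Tendsto (fun k : ℕ => (tmap α₂ β₂)^[k] x) Filter.atTop (nhds Pf)) ∧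
        sigma α₂ β₂ = psi (β₂ * Pf)) ∧
      -- (b)
      (Pc < tmap α₂ β₂ Pc →
        Real.sqrt (psi (β₂ * Pf) * psi (β₂ * tmap α₂ β₂ Pc)) ≤ sigma α₂ β₂) := by
  obtain ⟨hα0, hα1⟩ := hα₂
  obtain ⟨ys, hys, hFys⟩ := exists_ystar hα0 hα1
  have hmax := tmap_max hα0 hα1 hβ₂ hφ₂ hys hFys
  have hsm := tmap_strictMonoOn hα0 hα1 hβ₂ hφ₂ hys hFys
  have hsa := tmap_strictAntiOn hα0 hα1 hβ₂ hφ₂ hys hFys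
  have hPc := Pc_mem hα0 hβ₂ hφ₂ hys
  have hufPc := uf_Pc hβ₂ hys
  obtain ⟨Pf, hPf, hfix⟩ := exists_fixed hα0 hα1 hβ₂ hφ₂
  set Pc := -Real.log (1 - ys) / β₂ with hPc'
  have hys01 : ys ∈ Set.Ioo (0:ℝ) 1 := ⟨by linarith [hys.1], by linarith [hys.2]⟩
  have hpb0 : 0 ≤ pbar α₂ := pbar_nonneg hα0 hα1
  have hpb1 : pbar α₂ < 1 := lt_of_le_of_lt (pbar_le_2732 hα0 hα1) (by norm_num)
  have hpbpos : 0 < pbar α₂ :=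
    lt_of_lt_of_le (tmap_pos hα0 hα1 hβ₂ hPc.1) (tmap_le_pbar hα0 hα1 hβ₂ hPc.1.le)
  refine ⟨Pc, Pf, hPc, ?_, ?_, hmax, hPf, hfix, ?_, ?_, ?_⟩
  · -- deriv at Pc = 0
    rw [deriv_tmap_eq hα0 hα1 hβ₂ hPc.1, hufPc, hFys]
    ring
  · -- uniqueness of critical point
    intro x hx hd
    rw [deriv_tmap_eq hα0 hα1 hβ₂ hx.1] at hd
    have hGpos := Gf_pos (y := uf β₂ x) hα1 (uf_pos hβ₂ hx.1) uf_lt_one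
    have hbe : (0:ℝ) < β₂ * Real.exp (-(β₂ * x)) := mul_pos hβ₂ (Real.exp_pos _)
    have hF0 : Ff α₂ (uf β₂ x) = 0 := by
      by_contra h
      exact (mul_ne_zero (mul_ne_zero hGpos.ne' h) hbe.ne') hd
    have hueq : uf β₂ x = ys := by
      apply (Ff_strictAntiOn hα0 hα1).injOn
        ⟨uf_pos hβ₂ hx.1, uf_lt_one⟩ hys01
      rw [hF0, hFys]
    have : uf β₂ x = uf β₂ Pc := by rw [hueq, hufPc]
    exact (uf_strictMono hβ₂).injective this
  · -- uniqueness of fixed point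
    intro x hx h
    exact fixed_unique hα0 hα1 hβ₂ hPf hfix hx h
  · -- part (a)
    intro hcase
    have horball : ∀ x ∈ Set.Ioo (0:ℝ) 1,
        Filter.Tendsto (fun k : ℕ => (tmap α₂ β₂)^[k] x) Filter.atTop (nhds Pf) :=
      fun x hx => orbit_conv_all hα0 hα1 hβ₂ hPc hsm.monotoneOn hmax hPf hfix hcase hx
    refine ⟨horball, ?_⟩
    have hval : ∀ x : ℝ, 0 < x → x ≤ pbar α₂ →
        Filter.liminf
          (fun n : ℕ => (∏ k ∈ Finset.range n, psi (β₂ * (tmap α₂ β₂)^[k] x)) ^ (1 / (n:ℝ)))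
          Filter.atTop = psi (β₂ * Pf) := by
      intro x hx0 hx1
      exact (cseq_tendsto hα0 hα1 hβ₂ hPf hx0.le
        (horball x ⟨hx0, lt_of_le_of_lt hx1 hpb1⟩)).liminf_eq
    have hlow : ∀ v ∈ (fun x => Filter.liminf
        (fun n : ℕ => (∏ k ∈ Finset.range n, psi (β₂ * (tmap α₂ β₂)^[k] x)) ^ (1 / (n:ℝ)))
        Filter.atTop) '' Set.Icc 0 (pbar α₂), psi (β₂ * Pf) ≤ v := by
      rintro v ⟨x, hx, rfl⟩
      dsimp only
      rcases eq_or_lt_of_le hx.1 with h0 | h0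
      · rw [← h0, cseq_liminf_zero hβ₂]
        exact psi_le_one (mul_nonneg hβ₂.le hPf.1.le)
      · rw [hval x h0 hx.2]
    have hbdd : BddBelow ((fun x => Filter.liminf
        (fun n : ℕ => (∏ k ∈ Finset.range n, psi (β₂ * (tmap α₂ β₂)^[k] x)) ^ (1 / (n:ℝ)))
        Filter.atTop) '' Set.Icc 0 (pbar α₂)) := ⟨psi (β₂ * Pf), hlow⟩
    have hmem : psi (β₂ * Pf) ∈ (fun x => Filter.liminf
        (fun n : ℕ => (∏ k ∈ Finset.range n, psi (β₂ * (tmap α₂ β₂)^[k] x)) ^ (1 / (n:ℝ)))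
        Filter.atTop) '' Set.Icc 0 (pbar α₂) :=
      ⟨pbar α₂, ⟨hpb0, le_refl _⟩, hval _ hpbpos (le_refl _)⟩
    have hne : ((fun x => Filter.liminf
        (fun n : ℕ => (∏ k ∈ Finset.range n, psi (β₂ * (tmap α₂ β₂)^[k] x)) ^ (1 / (n:ℝ)))
        Filter.atTop) '' Set.Icc 0 (pbar α₂)).Nonempty := ⟨_, hmem⟩
    show sInf _ = _
    exact le_antisymm (csInf_le hbdd hmem) (le_csInf hne hlow)
  · -- part (b)
    intro hb
    have hPcPf : Pc ≤ Pf := by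
      by_contra h
      push_neg at h
      have := tmap_lt_of_gt_fixed hα0 hα1 hβ₂ hPf hfix h hPc.2
      linarith
    have hlow' : ∀ v ∈ (fun x => Filter.liminf
        (fun n : ℕ => (∏ k ∈ Finset.range n, psi (β₂ * (tmap α₂ β₂)^[k] x)) ^ (1 / (n:ℝ)))
        Filter.atTop) '' Set.Icc 0 (pbar α₂),
        Real.sqrt (psi (β₂ * Pf) * psi (β₂ * tmap α₂ β₂ Pc)) ≤ v := by
      rintro v ⟨x, hx, rfl⟩
      dsimp only
      exact liminf_lower_b hα0 hα1 hβ₂ hPc hPf hfix hmax hsa.antitoneOn hPcPf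
        hx.1 (le_trans hx.2 hpb1.le)
    have hne : ((fun x => Filter.liminf
        (fun n : ℕ => (∏ k ∈ Finset.range n, psi (β₂ * (tmap α₂ β₂)^[k] x)) ^ (1 / (n:ℝ)))
        Filter.atTop) '' Set.Icc 0 (pbar α₂)).Nonempty :=
      ⟨_, ⟨pbar α₂, ⟨hpb0, le_refl _⟩, rfl⟩⟩
    show _ ≤ sInf _
    exact le_csInf hne hlow'
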